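/- Let A_1, …, A_k be pairwise commuting N×N matrices with nonnegative integer entries forming an irreducible family, with every row sum of every A_i at least 2, let x be the unimodular Perron–Frobenius eigenvector, and fix δ ∈ (0,1). Then the Hausdorff dimension of the metric space (X_B, d_δ) equals δ. -/

import Mathlib

open scoped Classical ENNReal Topology
open TopologicalSpace MeasureTheory Filter Set

namespace KBratteli

open Fin.NatCast

variable (k N : ℕ) [NeZero k] (A : Fin k → Matrix (Fin N) (Fin N) ℕ)

/-- An edge at level `n` of the stationary `k`-Bratteli diagram of the matrices
`A 0, …, A (k-1)`: an element of `Edge k N A n` is an edge whose source lies in the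
level-`(n+1)` vertex set and whose range lies in the level-`n` vertex set (both copies of
`Fin N`); there are exactly `A (n % k) p q` edges with range `p` and source `q`. -/
structure Edge (n : ℕ) : Type where
  rg : Fin N
  src : Fin N
  idx : Fin (A (n : Fin k) rg src)

/-- The infinite path space `X_B` of the stationary `k`-Bratteli diagram of `A`. -/
def PathSpace : Type :=
  { x : (n : ℕ) → Edge k N A n // ∀ n, (x n).src = (x (n + 1)).rg }

/-- A finite path of length `ℓ` beginning at level `0`: a composable string of edges,
together with the vertices it visits.  Length-`0` paths are vertices of `V₀`. -/
structure FinPath (ℓ : ℕ) : Type where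
  vtx : Fin (ℓ + 1) → Fin N
  edge : (i : Fin ℓ) → Edge k N A i
  rg_eq : ∀ i : Fin ℓ, (edge i).rg = vtx i.castSucc
  src_eq : ∀ i : Fin ℓ, (edge i).src = vtx i.succ

/-- `FB`: the set of all finite paths (of all lengths) beginning at level `0`. -/
abbrev FB : Type := Σ ℓ : ℕ, FinPath k N A ℓ

variable {k N A}

/-- The source (final) vertex of a finite path. -/
def FinPath.src {ℓ : ℕ} (lam : FinPath k N A ℓ) : Fin N := lam.vtx (Fin.last ℓ)

/-- The range (initial, level-0) vertex of a finite path. -/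
def FinPath.rg {ℓ : ℕ} (lam : FinPath k N A ℓ) : Fin N := lam.vtx 0

/-- The length-0 finite path at the level-0 vertex `v`. -/
def vertexPath (v : Fin N) : FinPath k N A 0 where
  vtx := fun _ => v
  edge := fun i => i.elim0
  rg_eq := fun i => i.elim0
  src_eq := fun i => i.elim0

/-- The cylinder set `[λ]` of a finite path `λ`: all infinite paths with initial
segment `λ`. -/
def Cyl {ℓ : ℕ} (lam : FinPath k N A ℓ) : Set (PathSpace k N A) :=
  { x | (x.1 0).rg = lam.rg ∧ ∀ i : Fin ℓ, x.1 i = lam.edge i }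

variable (k N A) in
/-- The collection of all cylinder sets. -/
def cylinderSets : Set (Set (PathSpace k N A)) :=
  { S | ∃ (ℓ : ℕ) (lam : FinPath k N A ℓ), S = Cyl lam }

/-- The cylinder-set topology on the infinite path space. -/
instance : TopologicalSpace (PathSpace k N A) :=
  generateFrom (cylinderSets k N A)

/-- The Borel σ-algebra of the cylinder-set topology. -/
instance : MeasurableSpace (PathSpace k N A) := borel _

instance : BorelSpace (PathSpace k N A) := ⟨rfl⟩

lemma isOpen_cyl {ℓ : ℕ} (lam : FinPath k N A ℓ) : IsOpen (Cyl lam) :=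
  isOpen_generateFrom_of_mem ⟨ℓ, lam, rfl⟩

lemma measurableSet_cyl {ℓ : ℕ} (lam : FinPath k N A ℓ) : MeasurableSet (Cyl lam) :=
  (isOpen_cyl lam).measurableSet

/-- Edges form a finite type. -/
def edgeEquiv (n : ℕ) : Edge k N A n ≃ Σ p : Fin N, Σ q : Fin N, Fin (A (n : Fin k) p q) where
  toFun e := ⟨e.rg, e.src, e.idx⟩
  invFun t := ⟨t.1, t.2.1, t.2.2⟩
  left_inv e := rfl
  right_inv t := rfl

instance (n : ℕ) : Finite (Edge k N A n) := by
  haveI : ∀ p, Finite (Σ q : Fin N, Fin (A (n : Fin k) p q)) := fun p => Finite.instSigma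
  exact @Finite.of_equiv _ _ Finite.instSigma (edgeEquiv n).symm

instance (ℓ : ℕ) : Finite (FinPath k N A ℓ) := by
  have hinj : Function.Injective
      (fun lam : FinPath k N A ℓ => (lam.vtx, lam.edge)) := by
    rintro ⟨v, e, h1, h2⟩ ⟨v', e', h1', h2'⟩ h
    simp only [Prod.mk.injEq] at h
    obtain ⟨hv, he⟩ := h
    subst hv; subst he; rfl
  exact Finite.of_injective _ hinj

instance : Countable (FB k N A) := by infer_instance

/-- The initial segment of length `m` of an infinite path. -/
def prefixPath (x : PathSpace k N A) (m : ℕ) : FinPath k N A m where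
  vtx := fun i => (x.1 i).rg
  edge := fun i => x.1 i
  rg_eq := fun _ => rfl
  src_eq := fun i => x.2 i

lemma mem_cyl_prefixPath (x : PathSpace k N A) (m : ℕ) : x ∈ Cyl (prefixPath x m) :=
  ⟨rfl, fun _ => rfl⟩

lemma measurableSet_coord (j : ℕ) (P : Edge k N A j → Prop) :
    MeasurableSet { x : PathSpace k N A | P (x.1 j) } := by
  have h : { x : PathSpace k N A | P (x.1 j) }
      = ⋃ (lam : FinPath k N A (j + 1)) (_ : P (lam.edge (Fin.last j))), Cyl lam := by
    ext x
    simp only [Set.mem_setOf_eq, Set.mem_iUnion]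
    constructor
    · intro hx
      exact ⟨prefixPath x (j + 1), hx, mem_cyl_prefixPath x (j + 1)⟩
    · rintro ⟨lam, hP, -, hedge⟩
      have hx : x.1 j = lam.edge (Fin.last j) := hedge (Fin.last j)
      rw [hx]; exact hP
  rw [h]
  exact MeasurableSet.iUnion fun lam => MeasurableSet.iUnion fun _ => measurableSet_cyl lam

/-- The first level at which two infinite paths differ. -/
noncomputable def firstDiff (x y : PathSpace k N A) : ℕ := sInf { n | x.1 n ≠ y.1 n }

/-- The function `d_w` associated to a weight-type function `w` on finite paths:
`d_w(x,x) = 0`; `d_w(x,y) = 1` if `x` and `y` have no common initial sub-path (i.e. they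
do not even start at the same level-0 vertex); and otherwise `d_w(x,y) = w(x ∧ y)`, the
value of `w` on the longest common initial sub-path of `x` and `y`. -/
noncomputable def distW (w : FB k N A → ℝ) (x y : PathSpace k N A) : ℝ :=
  if x = y then 0
  else if (x.1 0).rg = (y.1 0).rg then w ⟨firstDiff x y, prefixPath x (firstDiff x y)⟩
  else 1

/-- `η` is an (initial) sub-path of `λ`. -/
def IsSubPath {m ℓ : ℕ} (η : FinPath k N A m) (lam : FinPath k N A ℓ) : Prop :=
  ∃ h : m ≤ ℓ, η.rg = lam.rg ∧ ∀ i : Fin m, η.edge i = lam.edge (Fin.castLE h i)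

/-- `lam ∈ F_γ B` : the finite path `lam` extends `γ`. -/
def Extends {m : ℕ} (γ : FinPath k N A m) (lam : FB k N A) : Prop :=
  IsSubPath γ lam.2

/-- The spectral radius of a matrix of nonnegative integers, as a real number. -/
noncomputable def specRad {N : ℕ} (M : Matrix (Fin N) (Fin N) ℕ) : ℝ :=
  (spectralRadius ℂ (M.map (Nat.cast : ℕ → ℂ))).toReal

/-- The weight `w_δ` on the stationary `k`-Bratteli diagram of `A`, relative to data
`ρ : Fin k → ℝ` (the spectral radii) and `xv : Fin N → ℝ` (the Perron–Frobenius
eigenvector): on a path `η` of length `q·k + t` (`0 ≤ t ≤ k-1`) it is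
`(ρ₁^{q+1} ⋯ ρ_t^{q+1} · ρ_{t+1}^q ⋯ ρ_k^q)^{-1/δ} · xv (s η)`. -/
noncomputable def wt (δ : ℝ) (ρ : Fin k → ℝ) (xv : Fin N → ℝ) (lam : FB k N A) : ℝ :=
  (∏ i : Fin k, ρ i ^ (if (i : ℕ) < lam.1 % k then lam.1 / k + 1 else lam.1 / k))
      ^ (-(1 / δ)) * xv lam.2.src

/-- The value `M([λ]) = (ρ₁⋯ρ_t)^{-(q+1)} (ρ_{t+1}⋯ρ_k)^{-q} · x_{s(λ)}` of the
measure `M` on the cylinder set of a path of length `q·k + t`. -/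
noncomputable def Mval (ρ : Fin k → ℝ) (xv : Fin N → ℝ) (lam : FB k N A) : ℝ :=
  (∏ i : Fin k, ρ i ^ (if (i : ℕ) < lam.1 % k then lam.1 / k + 1 else lam.1 / k))⁻¹
    * xv lam.2.src

/-- A family of matrices is irreducible if for every pair of indices some finite product
of matrices from the family has positive corresponding entry. -/
def IrreducibleFamily {k N : ℕ} (A : Fin k → Matrix (Fin N) (Fin N) ℕ) : Prop :=
  ∀ a b : Fin N, ∃ l : List (Fin k), 0 < (l.map A).prod a b

/-- A single square matrix with nonnegative integer entries is irreducible if for every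
pair of indices some positive power has positive corresponding entry. -/
def MatIrreducible {N : ℕ} (B : Matrix (Fin N) (Fin N) ℕ) : Prop :=
  ∀ a b : Fin N, ∃ m : ℕ, 0 < m ∧ 0 < (B ^ m) a b

/-- The diameter (in `ℝ≥0∞`) of a set of infinite paths relative to `d_w`. -/
noncomputable def diamW (w : FB k N A → ℝ) (U : Set (PathSpace k N A)) : ℝ≥0∞ :=
  ⨆ (x) (_ : x ∈ U) (y) (_ : y ∈ U), ENNReal.ofReal (distW w x y)

/-- The `t`-dimensional Hausdorff (outer) measure of a set `Z` relative to the metric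
`d_w`: `H^t(Z) = lim_{ε → 0} inf { Σᵢ (diam Uᵢ)^t : Z ⊆ ⋃ᵢ Uᵢ, diam Uᵢ < ε }`. -/
noncomputable def hausW (w : FB k N A → ℝ) (t : ℝ) (Z : Set (PathSpace k N A)) : ℝ≥0∞ :=
  ⨆ (ε : ℝ≥0∞) (_ : 0 < ε),
    ⨅ (U : ℕ → Set (PathSpace k N A)) (_ : Z ⊆ ⋃ n, U n)
      (_ : ∀ n, diamW w (U n) < ε), ∑' n, diamW w (U n) ^ t

lemma natCast_mul_add (n i : ℕ) : ((n * k + i : ℕ) : Fin k) = (i : Fin k) := by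
  push_cast
  simp [Fin.natCast_self]

/-- Transport of edges between levels governed by the same matrix (the diagram is
stationary with period `k`). -/
def Edge.cast {i j : ℕ} (h : (i : Fin k) = (j : Fin k)) (e : Edge k N A i) :
    Edge k N A j where
  rg := e.rg
  src := e.src
  idx := Fin.cast (by rw [h]) e.idx

/-- The cylinder set `[γ e]` of a finite path `γ` (of length `m`) extended by one
further edge `e` at level `m`. -/
def cylExt {m : ℕ} (γ : FinPath k N A m) (e : Edge k N A m) : Set (PathSpace k N A) :=
  Cyl γ ∩ { x | x.1 m = e }

lemma measurableSet_cylExt {m : ℕ} (γ : FinPath k N A m) (e : Edge k N A m) :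
    MeasurableSet (cylExt γ e) :=
  (measurableSet_cyl γ).inter (measurableSet_coord m fun f => f = e)

/-- The cylinder set `[λ μ]` of the concatenation of `λ ∈ F^{nk}B` with `μ ∈ F^{k}B`
(the diagram being stationary of period `k`, `μ` concatenates onto `λ`). -/
def cylCat {n : ℕ} (lam : FinPath k N A (n * k)) (η : FinPath k N A k) :
    Set (PathSpace k N A) :=
  Cyl lam ∩ { x | (x.1 (n * k)).rg = η.rg } ∩
    ⋂ i : Fin k,
      { x | x.1 (n * k + (i : ℕ)) = Edge.cast (natCast_mul_add n (i : ℕ)).symm (η.edge i) }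

lemma measurableSet_cylCat {n : ℕ} (lam : FinPath k N A (n * k)) (η : FinPath k N A k) :
    MeasurableSet (cylCat lam η) :=
  ((measurableSet_cyl lam).inter
      (measurableSet_coord (n * k) (fun e => e.rg = η.rg))).inter
    (MeasurableSet.iInter fun i => measurableSet_coord (n * k + (i : ℕ))
      (fun e => e = Edge.cast (natCast_mul_add n (i : ℕ)).symm (η.edge i)))



end KBratteli

namespace KBratteli

open Fin.NatCast

section Aux
variable {k N : ℕ} [NeZero k] {A : Fin k → Matrix (Fin N) (Fin N) ℕ}

noncomputable instance (n : ℕ) : Fintype (Edge k N A n) := Fintype.ofFinite _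
noncomputable instance (ℓ : ℕ) : Fintype (FinPath k N A ℓ) := Fintype.ofFinite _

lemma FinPath.ext' {ℓ : ℕ} {p q : FinPath k N A ℓ} (hv : p.vtx = q.vtx)
    (he : p.edge = q.edge) : p = q := by
  cases p; cases q; cases hv; cases he; rfl

lemma FinPath.eq_of_rg_edge {ℓ : ℕ} {p q : FinPath k N A ℓ} (h0 : p.rg = q.rg)
    (he : p.edge = q.edge) : p = q := by
  have hv : p.vtx = q.vtx := by
    funext i
    induction i using Fin.induction with
    | zero => exact h0
    | succ j ih => rw [← p.src_eq j, ← q.src_eq j, he]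
  exact FinPath.ext' hv he

/-- Extend a finite path by one edge. -/
def FinPath.extend {n : ℕ} (lam : FinPath k N A n) (e : Edge k N A n)
    (he : e.rg = lam.src) : FinPath k N A (n + 1) where
  vtx := Fin.snoc lam.vtx e.src
  edge := fun i => Fin.lastCases (motive := fun i : Fin (n+1) => Edge k N A i) e
    (fun j => lam.edge j) i
  rg_eq := by
    intro i
    induction i using Fin.lastCases with
    | last =>
      simp only [Fin.lastCases_last]
      have h : (Fin.last n).castSucc = Fin.castSucc (Fin.last n) := rfl
      rw [h, Fin.snoc_castSucc]
      exact he
    | cast j =>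
      simp only [Fin.lastCases_castSucc]
      have h : (j.castSucc).castSucc = Fin.castSucc j.castSucc := rfl
      rw [h, Fin.snoc_castSucc]
      exact lam.rg_eq j
  src_eq := by
    intro i
    induction i using Fin.lastCases with
    | last =>
      simp only [Fin.lastCases_last, Fin.succ_last, Fin.snoc_last]
    | cast j =>
      simp only [Fin.lastCases_castSucc]
      rw [Fin.succ_castSucc, Fin.snoc_castSucc]
      exact lam.src_eq j

/-- The initial part (all but the last edge) of a finite path. -/
def FinPath.init {n : ℕ} (μ : FinPath k N A (n + 1)) : FinPath k N A n where
  vtx := fun i => μ.vtx i.castSucc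
  edge := fun j => μ.edge j.castSucc
  rg_eq := fun j => μ.rg_eq j.castSucc
  src_eq := fun j => by
    have h := μ.src_eq j.castSucc
    rwa [Fin.succ_castSucc] at h

lemma FinPath.init_src {n : ℕ} (μ : FinPath k N A (n + 1)) :
    μ.init.src = (μ.edge (Fin.last n)).rg := by
  rw [μ.rg_eq (Fin.last n)]; rfl

lemma FinPath.extend_src {n : ℕ} (lam : FinPath k N A n) (e : Edge k N A n)
    (he : e.rg = lam.src) : (lam.extend e he).src = e.src := by
  simp only [FinPath.extend, FinPath.src, Fin.snoc_last]

lemma FinPath.extend_rg {n : ℕ} (lam : FinPath k N A n) (e : Edge k N A n)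
    (he : e.rg = lam.src) : (lam.extend e he).rg = lam.rg := by
  simp only [FinPath.extend, FinPath.rg]
  rw [show (0 : Fin (n+1+1)) = Fin.castSucc (0 : Fin (n+1)) from rfl, Fin.snoc_castSucc]

lemma FinPath.init_extend {n : ℕ} (lam : FinPath k N A n) (e : Edge k N A n)
    (he : e.rg = lam.src) : (lam.extend e he).init = lam := by
  apply FinPath.ext'
  · funext i
    simp only [FinPath.extend, FinPath.init, Fin.snoc_castSucc]
  · funext j
    simp only [FinPath.extend, FinPath.init, Fin.lastCases_castSucc]

lemma FinPath.extend_edge_last {n : ℕ} (lam : FinPath k N A n) (e : Edge k N A n)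
    (he : e.rg = lam.src) : (lam.extend e he).edge (Fin.last n) = e := by
  simp only [FinPath.extend, Fin.lastCases_last]

lemma FinPath.extend_init {n : ℕ} (μ : FinPath k N A (n + 1)) :
    μ.init.extend (μ.edge (Fin.last n)) μ.init_src.symm = μ := by
  apply FinPath.ext'
  · funext i
    induction i using Fin.lastCases with
    | last =>
      simp only [FinPath.extend, Fin.snoc_last]
      rw [μ.src_eq (Fin.last n), Fin.succ_last]
    | cast j =>
      simp only [FinPath.extend, FinPath.init, Fin.snoc_castSucc]
  · funext i
    induction i using Fin.lastCases with
    | last =>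
      simp only [FinPath.extend, Fin.lastCases_last]
    | cast j =>
      simp only [FinPath.extend, FinPath.init, Fin.lastCases_castSucc]

/-- Summation over length-`(n+1)` paths by splitting off the last edge. -/
lemma sum_finPath_succ {n : ℕ} (f : FinPath k N A (n + 1) → ℝ) :
    ∑ μ : FinPath k N A (n + 1), f μ
      = ∑ lam : FinPath k N A n, ∑ e : Edge k N A n,
          (if he : e.rg = lam.src then f (lam.extend e he) else 0) := by
  classical
  have hbij : Function.Bijective
      (fun p : Σ lam : FinPath k N A n, {e : Edge k N A n // e.rg = lam.src} =>
        p.1.extend p.2.1 p.2.2) := by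
    constructor
    · rintro ⟨lam, e, he⟩ ⟨lam', e', he'⟩ h
      simp only at h
      have h1 : lam = lam' := by
        rw [← FinPath.init_extend lam e he, ← FinPath.init_extend lam' e' he', h]
      subst h1
      have h2 : e = e' := by
        rw [← FinPath.extend_edge_last lam e he, ← FinPath.extend_edge_last lam e' he', h]
      subst h2
      rfl
    · intro μ
      exact ⟨⟨μ.init, μ.edge (Fin.last n), μ.init_src.symm⟩, μ.extend_init⟩
  rw [← Fintype.sum_bijective _ hbij (fun p => f (p.1.extend p.2.1 p.2.2)) f (fun p => rfl)]
  rw [← Finset.univ_sigma_univ, Finset.sum_sigma]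
  apply Finset.sum_congr rfl
  intro lam _
  have step1 : ∑ (e : {e : Edge k N A n // e.rg = lam.src}), f (lam.extend e.1 e.2)
      = ∑ (e : {e : Edge k N A n // e.rg = lam.src}),
          (fun e' : Edge k N A n =>
            if he : e'.rg = lam.src then f (lam.extend e' he) else 0) e.1 := by
    apply Finset.sum_congr rfl
    intro e _
    beta_reduce
    rw [dif_pos e.2]
  rw [step1, ← Finset.sum_subtype
      (Finset.univ.filter (fun e : Edge k N A n => e.rg = lam.src)) (by simp)
      (fun e' : Edge k N A n =>
        if he : e'.rg = lam.src then f (lam.extend e' he) else 0)]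
  rw [Finset.sum_filter]
  apply Finset.sum_congr rfl
  intro e _
  by_cases he : e.rg = lam.src <;> simp [he]


/-- The product `ρ(0 mod k) ⋯ ρ((n-1) mod k)`. -/
noncomputable def Pprod (ρ : Fin k → ℝ) (n : ℕ) : ℝ :=
  ∏ j ∈ Finset.range n, ρ ((j : ℕ) : Fin k)

variable (ρ : Fin k → ℝ)

lemma prod_if_eq_Pprod (n : ℕ) :
    (∏ i : Fin k, ρ i ^ (if (i : ℕ) < n % k then n / k + 1 else n / k)) = Pprod ρ n := by
  induction n with
  | zero => simp [Pprod]
  | succ n ih =>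
    have kpos : 0 < k := Nat.pos_of_ne_zero (NeZero.ne k)
    set r := n % k with hr
    set q := n / k with hq
    have hrk : r < k := Nat.mod_lt _ kpos
    have hn : n = k * q + r := by rw [hr, hq]; exact (Nat.div_add_mod n k).symm
    have hfin : ((n : ℕ) : Fin k) = ⟨r, hrk⟩ := by
      apply Fin.ext; simp [Fin.val_natCast, hr]
    have key : (∏ i : Fin k, ρ i ^ (if (i : ℕ) < (n+1) % k then (n+1) / k + 1 else (n+1) / k))
        = (∏ i : Fin k, ρ i ^ (if (i : ℕ) < r then q + 1 else q)) * ρ ⟨r, hrk⟩ := by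
      by_cases hcase : r + 1 < k
      · have hm : (n + 1) % k = r + 1 := by
          have h1 : n + 1 = k * q + (r + 1) := by omega
          rw [h1, Nat.mul_add_mod, Nat.mod_eq_of_lt hcase]
        have hd : (n + 1) / k = q := by
          have h1 : n + 1 = k * q + (r + 1) := by omega
          rw [h1, Nat.mul_add_div kpos, Nat.div_eq_of_lt hcase, add_zero]
        rw [hm, hd]
        rw [show (∏ i : Fin k, ρ i ^ (if (i : ℕ) < r then q + 1 else q)) * ρ ⟨r, hrk⟩
            = ∏ i : Fin k, (ρ i ^ (if (i : ℕ) < r then q + 1 else q)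
                * (if i = ⟨r, hrk⟩ then ρ i else 1)) by
          rw [Finset.prod_mul_distrib, Finset.prod_ite_eq' Finset.univ ⟨r, hrk⟩ ρ,
            if_pos (Finset.mem_univ _)]]
        apply Finset.prod_congr rfl
        intro i _
        by_cases hi : (i : ℕ) = r
        · rw [hi, if_pos (Nat.lt_succ_self r), if_neg (lt_irrefl r),
            if_pos (Fin.ext hi : i = ⟨r, hrk⟩), pow_succ]
        · have hne : i ≠ ⟨r, hrk⟩ := fun h => hi (congrArg Fin.val h)
          have : ((i : ℕ) < r + 1) ↔ ((i : ℕ) < r) := by omega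
          rw [if_neg hne, mul_one]
          by_cases h2 : (i : ℕ) < r
          · rw [if_pos (this.mpr h2), if_pos h2]
          · rw [if_neg (fun hh => h2 (this.mp hh)), if_neg h2]
      · have hrk1 : r + 1 = k := by omega
        have h1 : n + 1 = k * (q + 1) := by rw [Nat.mul_add, Nat.mul_one]; omega
        have hm : (n + 1) % k = 0 := by rw [h1, Nat.mul_mod_right]
        have hd : (n + 1) / k = q + 1 := by rw [h1, Nat.mul_div_cancel_left _ kpos]
        rw [hm, hd]
        rw [show (∏ i : Fin k, ρ i ^ (if (i : ℕ) < r then q + 1 else q)) * ρ ⟨r, hrk⟩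
            = ∏ i : Fin k, (ρ i ^ (if (i : ℕ) < r then q + 1 else q)
                * (if i = ⟨r, hrk⟩ then ρ i else 1)) by
          rw [Finset.prod_mul_distrib, Finset.prod_ite_eq' Finset.univ ⟨r, hrk⟩ ρ,
            if_pos (Finset.mem_univ _)]]
        apply Finset.prod_congr rfl
        intro i _
        rw [if_neg (Nat.not_lt_zero _)]
        by_cases hi : (i : ℕ) = r
        · rw [hi, if_neg (lt_irrefl r), if_pos (Fin.ext hi : i = ⟨r, hrk⟩), pow_succ]
        · have hne : i ≠ ⟨r, hrk⟩ := fun h => hi (congrArg Fin.val h)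
          have hlt : (i : ℕ) < r := by have := i.2; omega
          rw [if_pos hlt, if_neg hne, mul_one]
    rw [key, ih, Pprod, Pprod, Finset.prod_range_succ, hfin]

variable {ρ}

lemma Pprod_pos (hρ2 : ∀ i, 2 ≤ ρ i) (n : ℕ) : 0 < Pprod ρ n :=
  Finset.prod_pos fun j _ => lt_of_lt_of_le two_pos (hρ2 _)

lemma Pprod_ge (hρ2 : ∀ i, 2 ≤ ρ i) (n : ℕ) : (2 : ℝ) ^ n ≤ Pprod ρ n := by
  induction n with
  | zero => simp [Pprod]
  | succ n ih =>
    rw [Pprod, Finset.prod_range_succ, pow_succ]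
    exact mul_le_mul ih (hρ2 _) (by norm_num) (le_of_lt (Pprod_pos hρ2 n))

lemma Pprod_one_le (hρ2 : ∀ i, 2 ≤ ρ i) (n : ℕ) : (1 : ℝ) ≤ Pprod ρ n :=
  le_trans (one_le_pow₀ (by norm_num)) (Pprod_ge hρ2 n)

lemma Pprod_mono (hρ2 : ∀ i, 2 ≤ ρ i) {m n : ℕ} (h : m ≤ n) : Pprod ρ m ≤ Pprod ρ n := by
  have h1 : (1 : ℝ) ≤ ∏ j ∈ Finset.Ico m n, ρ ((j : ℕ) : Fin k) := by
    calc (1 : ℝ) = ∏ _j ∈ Finset.Ico m n, (1 : ℝ) := by simp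
      _ ≤ ∏ j ∈ Finset.Ico m n, ρ ((j : ℕ) : Fin k) :=
          Finset.prod_le_prod (fun _ _ => zero_le_one)
            (fun j _ => le_trans one_le_two (hρ2 _))
  calc Pprod ρ m = Pprod ρ m * 1 := (mul_one _).symm
    _ ≤ Pprod ρ m * ∏ j ∈ Finset.Ico m n, ρ ((j : ℕ) : Fin k) :=
        mul_le_mul_of_nonneg_left h1 (le_of_lt (Pprod_pos hρ2 m))
    _ = Pprod ρ n := Finset.prod_range_mul_prod_Ico _ h

lemma wt_eq (δ : ℝ) (xv : Fin N → ℝ) {n : ℕ} (lam : FinPath k N A n) :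
    wt δ ρ xv ⟨n, lam⟩ = (Pprod ρ n) ^ (-(1/δ)) * xv lam.src := by
  rw [wt]
  exact congrArg₂ (fun (a b : ℝ) => a ^ (-(1/δ)) * b) (prod_if_eq_Pprod ρ n) rfl

section Sums

variable (x : Fin N → ℝ)

lemma sum_edge_src
    (hxeig : ∀ i, ((A i).map (Nat.cast : ℕ → ℝ)).mulVec x = ρ i • x)
    (n : ℕ) (v : Fin N) :
    ∑ e : Edge k N A n, (if e.rg = v then x e.src else 0)
      = ρ ((n : ℕ) : Fin k) * x v := by
  classical
  set i : Fin k := ((n : ℕ) : Fin k) with hi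
  letI : ∀ p : Fin N, Fintype (Σ q : Fin N, Fin (A i p q)) := fun p => inferInstance
  have heq : ∑ e : Edge k N A n, (if e.rg = v then x e.src else 0)
      = ∑ t : (Σ p : Fin N, Σ q : Fin N, Fin (A i p q)),
          (if t.1 = v then x t.2.1 else 0) := by
    apply Fintype.sum_equiv (edgeEquiv n)
    intro e
    rfl
  rw [heq, ← Finset.univ_sigma_univ, Finset.sum_sigma]
  have hsum : ∀ p : Fin N, (∑ t : (Σ q : Fin N, Fin (A i p q)),
      (if p = v then x t.1 else 0)) = if p = v then ∑ q, (A i p q : ℝ) * x q else 0 := by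
    intro p
    by_cases hp : p = v
    · simp only [if_pos hp]
      rw [← Finset.univ_sigma_univ, Finset.sum_sigma]
      apply Finset.sum_congr rfl
      intro q _
      simp [mul_comm]
    · simp [hp]
  calc ∑ p : Fin N, ∑ t : (Σ q : Fin N, Fin (A i p q)), (if p = v then x t.1 else 0)
      = ∑ p : Fin N, (if p = v then ∑ q, (A i p q : ℝ) * x q else 0) := by
        exact Finset.sum_congr rfl fun p _ => hsum p
    _ = ∑ q, (A i v q : ℝ) * x q := by
        rw [Finset.sum_ite_eq' Finset.univ v, if_pos (Finset.mem_univ _)]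
    _ = ρ i * x v := by
        have h := congrFun (hxeig i) v
        simpa [Matrix.mulVec, dotProduct, Matrix.map_apply] using h

lemma sum_src_eq_Pprod
    (hxeig : ∀ i, ((A i).map (Nat.cast : ℕ → ℝ)).mulVec x = ρ i • x)
    (hxsum : ∑ v, x v = 1) :
    ∀ n, ∑ lam : FinPath k N A n, x lam.src = Pprod ρ n := by
  intro n
  induction n with
  | zero =>
    have hbij : Function.Bijective (vertexPath (k := k) (N := N) (A := A)) := by
      constructor
      · intro v w h
        exact congrFun (congrArg FinPath.vtx h) 0
      · intro lam
        refine ⟨lam.vtx 0, ?_⟩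
        apply FinPath.ext'
        · funext i
          have h0 : i = 0 := Fin.ext (Nat.lt_one_iff.mp i.2)
          rw [h0]; rfl
        · funext i; exact i.elim0
    rw [← Fintype.sum_bijective _ hbij (fun v => x (vertexPath (A := A) v).src)
      (fun lam => x lam.src) (fun v => rfl)]
    simp only [vertexPath, FinPath.src]
    rw [hxsum, Pprod]
    simp
  | succ n ih =>
    rw [sum_finPath_succ (fun μ => x μ.src)]
    have : ∀ lam : FinPath k N A n, (∑ e : Edge k N A n,
        if he : e.rg = lam.src then x (lam.extend e he).src else 0)
        = ρ ((n : ℕ) : Fin k) * x lam.src := by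
      intro lam
      rw [← sum_edge_src x hxeig n lam.src]
      apply Finset.sum_congr rfl
      intro e _
      by_cases he : e.rg = lam.src
      · rw [dif_pos he, if_pos he, FinPath.extend_src]
      · rw [dif_neg he, if_neg he]
    rw [Finset.sum_congr rfl (fun lam _ => this lam), ← Finset.mul_sum, ih,
      Pprod, Pprod, Finset.prod_range_succ]
    exact mul_comm _ _

lemma IsSubPath.refl {m : ℕ} (γ : FinPath k N A m) : IsSubPath γ γ :=
  ⟨le_refl _, rfl, fun i => rfl⟩

lemma IsSubPath.eq_of_eq_length {m : ℕ} {γ η : FinPath k N A m}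
    (h : IsSubPath γ η) : η = γ := by
  obtain ⟨hle, hrg, hedge⟩ := h
  refine (FinPath.eq_of_rg_edge hrg ?_).symm
  funext i
  exact hedge i

lemma FinPath.extend_edge_castSucc {n : ℕ} (lam : FinPath k N A n) (e : Edge k N A n)
    (he : e.rg = lam.src) (j : Fin n) :
    (lam.extend e he).edge j.castSucc = lam.edge j := by
  simp only [FinPath.extend, Fin.lastCases_castSucc]

lemma isSubPath_extend_iff {m L : ℕ} (hmL : m ≤ L) (γ : FinPath k N A m)
    (lam : FinPath k N A L) (e : Edge k N A L) (he : e.rg = lam.src) :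
    IsSubPath γ (lam.extend e he) ↔ IsSubPath γ lam := by
  constructor
  · rintro ⟨hle, hrg, hedge⟩
    refine ⟨hmL, ?_, ?_⟩
    · rw [hrg, FinPath.extend_rg]
    · intro i
      rw [hedge i]
      exact FinPath.extend_edge_castSucc lam e he (Fin.castLE hmL i)
  · rintro ⟨hle, hrg, hedge⟩
    refine ⟨le_trans hmL (Nat.le_succ L), ?_, ?_⟩
    · rw [hrg, FinPath.extend_rg]
    · intro i
      rw [hedge i]
      exact (FinPath.extend_edge_castSucc lam e he (Fin.castLE hle i)).symm

lemma sum_subpath_src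
    (hxeig : ∀ i, ((A i).map (Nat.cast : ℕ → ℝ)).mulVec x = ρ i • x)
    {m : ℕ} (γ : FinPath k N A m) :
    ∀ L, m ≤ L →
      (∑ η : FinPath k N A L, if IsSubPath γ η then x η.src else 0)
        = (∏ j ∈ Finset.Ico m L, ρ ((j : ℕ) : Fin k)) * x γ.src := by
  intro L hmL0
  induction L, hmL0 using Nat.le_induction with
  | base =>
    have : (∑ η : FinPath k N A m, if IsSubPath γ η then x η.src else 0)
        = ∑ η : FinPath k N A m, if η = γ then x η.src else 0 := by
      apply Finset.sum_congr rfl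
      intro η _
      congr 1
      · simp only [eq_iff_iff]
        exact ⟨fun h => h.eq_of_eq_length, fun h => h ▸ IsSubPath.refl γ⟩
    rw [this, Finset.sum_ite_eq' Finset.univ γ, if_pos (Finset.mem_univ _)]
    simp
  | succ L hmL ih =>
    rw [sum_finPath_succ (fun η => if IsSubPath γ η then x η.src else 0)]
    have key : ∀ lam : FinPath k N A L,
        (∑ e : Edge k N A L, if he : e.rg = lam.src then
            (if IsSubPath γ (lam.extend e he) then x (lam.extend e he).src else 0) else 0)
        = if IsSubPath γ lam then ρ ((L : ℕ) : Fin k) * x lam.src else 0 := by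
      intro lam
      by_cases hsub : IsSubPath γ lam
      · rw [if_pos hsub, ← sum_edge_src x hxeig L lam.src]
        apply Finset.sum_congr rfl
        intro e _
        by_cases he : e.rg = lam.src
        · rw [dif_pos he, if_pos he, if_pos ((isSubPath_extend_iff hmL γ lam e he).mpr hsub),
            FinPath.extend_src]
        · rw [dif_neg he, if_neg he]
      · rw [if_neg hsub]
        apply Finset.sum_eq_zero
        intro e _
        by_cases he : e.rg = lam.src
        · rw [dif_pos he, if_neg (fun h => hsub ((isSubPath_extend_iff hmL γ lam e he).mp h))]
        · rw [dif_neg he]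
    rw [Finset.sum_congr rfl (fun lam _ => key lam)]
    have : (∑ lam : FinPath k N A L, if IsSubPath γ lam
          then ρ ((L : ℕ) : Fin k) * x lam.src else 0)
        = ρ ((L : ℕ) : Fin k) * ∑ lam : FinPath k N A L,
            (if IsSubPath γ lam then x lam.src else 0) := by
      rw [Finset.mul_sum]
      apply Finset.sum_congr rfl
      intro lam _
      by_cases hsub : IsSubPath γ lam <;> simp [hsub]
    rw [this, ih, Finset.prod_Ico_succ_top hmL]
    ring

end Sums


section Cover

lemma exists_edge (hrow : ∀ (i : Fin k) (a : Fin N), 2 ≤ ∑ b, A i a b)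
    (n : ℕ) (v : Fin N) : ∃ e : Edge k N A n, e.rg = v := by
  have h : ∃ b, 0 < A ((n : ℕ) : Fin k) v b := by
    by_contra hc
    push_neg at hc
    have h0 : (∑ b, A ((n : ℕ) : Fin k) v b) = 0 :=
      Finset.sum_eq_zero fun b _ => Nat.le_zero.mp (hc b)
    have h2 := hrow ((n : ℕ) : Fin k) v
    omega
  obtain ⟨b, hb⟩ := h
  exact ⟨⟨v, b, ⟨0, hb⟩⟩, rfl⟩

/-- A sequence of edges extending a given finite path, built from a choice of
outgoing edges. -/
noncomputable def buildEdges (step : ∀ n (v : Fin N), {e : Edge k N A n // e.rg = v})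
    {m : ℕ} (γ : FinPath k N A m) : ∀ n, Edge k N A n
  | 0 => if h : 0 < m then γ.edge ⟨0, h⟩ else (step 0 γ.src).1
  | (n+1) => if h : n + 1 < m then γ.edge ⟨n+1, h⟩
      else (step (n+1) (buildEdges step γ n).src).1

lemma buildEdges_lt (step : ∀ n (v : Fin N), {e : Edge k N A n // e.rg = v})
    {m : ℕ} (γ : FinPath k N A m) {i : ℕ} (h : i < m) :
    buildEdges step γ i = γ.edge ⟨i, h⟩ := by
  cases i with
  | zero => simp [buildEdges, h]
  | succ n => simp [buildEdges, h]

lemma cyl_nonempty (hrow : ∀ (i : Fin k) (a : Fin N), 2 ≤ ∑ b, A i a b)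
    {m : ℕ} (γ : FinPath k N A m) : (Cyl γ).Nonempty := by
  classical
  have step : ∀ n (v : Fin N), {e : Edge k N A n // e.rg = v} := fun n v =>
    ⟨(exists_edge hrow n v).choose, (exists_edge hrow n v).choose_spec⟩
  have hcompat : ∀ n, (buildEdges step γ n).src = (buildEdges step γ (n+1)).rg := by
    intro n
    by_cases h : n + 1 < m
    · have hn : n < m := Nat.lt_of_succ_lt h
      rw [buildEdges_lt step γ hn, buildEdges_lt step γ h, γ.src_eq, γ.rg_eq]
      congr 1
    · show _ = (buildEdges step γ (n+1)).rg
      rw [show buildEdges step γ (n+1)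
          = (step (n+1) (buildEdges step γ n).src).1 by simp [buildEdges, h]]
      exact (step (n+1) (buildEdges step γ n).src).2.symm
  refine ⟨⟨buildEdges step γ, hcompat⟩, ?_, ?_⟩
  · show (buildEdges step γ 0).rg = γ.rg
    by_cases h : 0 < m
    · rw [buildEdges_lt step γ h, γ.rg_eq]
      congr 1
    · rw [show buildEdges step γ 0 = (step 0 γ.src).1 by simp [buildEdges, h]]
      rw [(step 0 γ.src).2]
      have hm0 : m = 0 := Nat.eq_zero_of_not_pos h
      subst hm0
      show γ.vtx (Fin.last 0) = γ.vtx 0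
      congr 1
  · intro i
    show buildEdges step γ (i : ℕ) = γ.edge i
    rw [buildEdges_lt step γ i.2]

lemma cyl_cover_finite (C : ℕ → FB k N A)
    (hcov : ∀ z : PathSpace k N A, ∃ i, z ∈ Cyl (C i).2) :
    ∃ s : Finset ℕ, ∀ z : PathSpace k N A, ∃ i ∈ s, z ∈ Cyl (C i).2 := by
  classical
  letI tE : ∀ n, TopologicalSpace (Edge k N A n) := fun _ => ⊥
  haveI dE : ∀ n, DiscreteTopology (Edge k N A n) := fun _ => ⟨rfl⟩
  haveI cE : ∀ n, CompactSpace (Edge k N A n) := fun _ => Finite.compactSpace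
  set P := ∀ n, Edge k N A n with hP
  set K : Set P := {f | ∀ n, (f n).src = (f (n+1)).rg} with hK
  set Op : FB k N A → Set P := fun lam =>
    {f | (f 0).rg = lam.2.rg ∧ ∀ i : Fin lam.1, f (i : ℕ) = lam.2.edge i} with hOp
  have hopen : ∀ lam, IsOpen (Op lam) := by
    intro lam
    have h1 : IsOpen {f : P | (f 0).rg = lam.2.rg} :=
      (continuous_apply 0).isOpen_preimage {e : Edge k N A 0 | e.rg = lam.2.rg}
        (isOpen_discrete _)
    have h2 : ∀ i : Fin lam.1, IsOpen {f : P | f (i : ℕ) = lam.2.edge i} := fun i =>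
      (continuous_apply (i : ℕ)).isOpen_preimage {e : Edge k N A (i : ℕ) | e = lam.2.edge i}
        (isOpen_discrete _)
    have heq : Op lam = {f : P | (f 0).rg = lam.2.rg}
        ∩ ⋂ i : Fin lam.1, {f : P | f (i : ℕ) = lam.2.edge i} := by
      ext f
      simp [hOp, Set.mem_iInter]
    rw [heq]
    exact h1.inter (isOpen_iInter_of_finite h2)
  have hclosed : IsClosed K := by
    have heq : K = ⋂ n, {f : P | (f n).src = (f (n+1)).rg} := by
      ext f; simp [hK, Set.mem_iInter]
    rw [heq]
    apply isClosed_iInter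
    intro n
    have heq2 : {f : P | (f n).src = (f (n+1)).rg}
        = (fun f : P => (f n, f (n+1))) ⁻¹'
            {p : Edge k N A n × Edge k N A (n+1) | p.1.src = p.2.rg} := rfl
    rw [heq2]
    apply IsClosed.preimage ((continuous_apply n).prodMk (continuous_apply (n+1)))
    exact isClosed_discrete _
  have hKcomp : IsCompact K := hclosed.isCompact
  have hKsub : K ⊆ ⋃ i, Op (C i) := by
    intro f hf
    obtain ⟨i, hi⟩ := hcov ⟨f, hf⟩
    exact Set.mem_iUnion.mpr ⟨i, hi⟩
  obtain ⟨s, hs⟩ := hKcomp.elim_finite_subcover (fun i => Op (C i)) (fun i => hopen _) hKsub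
  refine ⟨s, fun z => ?_⟩
  have hz : z.1 ∈ K := z.2
  obtain ⟨i, hi, hmem⟩ := Set.mem_iUnion₂.mp (hs hz)
  exact ⟨i, hi, hmem⟩

lemma finite_cover_mass (x : Fin N → ℝ)
    (hxeig : ∀ i, ((A i).map (Nat.cast : ℕ → ℝ)).mulVec x = ρ i • x)
    (hxsum : ∑ v, x v = 1) (hxpos : ∀ v, 0 < x v) (hρ2 : ∀ i, 2 ≤ ρ i)
    (hrow : ∀ (i : Fin k) (a : Fin N), 2 ≤ ∑ b, A i a b)
    (C : ℕ → FB k N A) (s : Finset ℕ)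
    (hs : ∀ z : PathSpace k N A, ∃ i ∈ s, z ∈ Cyl (C i).2) :
    (1 : ℝ) ≤ ∑ i ∈ s, (Pprod ρ (C i).1)⁻¹ * x (C i).2.src := by
  classical
  set L := s.sup (fun i => (C i).1) with hLdef
  have hchoice : ∀ η : FinPath k N A L, ∃ i ∈ s, IsSubPath (C i).2 η := by
    intro η
    obtain ⟨z, hz⟩ := cyl_nonempty hrow η
    obtain ⟨i, his, hzi⟩ := hs z
    have hlen : (C i).1 ≤ L := by rw [hLdef]; exact Finset.le_sup (f := fun i => (C i).1) his
    refine ⟨i, his, hlen, ?_, ?_⟩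
    · rw [← hzi.1, hz.1]
    · intro j
      rw [← hzi.2 j]
      exact hz.2 (Fin.castLE hlen j)
  choose pick hpick hsubp using hchoice
  have hnneg : ∀ (n : ℕ), (0 : ℝ) ≤ (Pprod ρ n)⁻¹ := fun n =>
    le_of_lt (inv_pos.mpr (Pprod_pos hρ2 n))
  have h1 : (1 : ℝ) = ∑ η : FinPath k N A L, (Pprod ρ L)⁻¹ * x η.src := by
    rw [← Finset.mul_sum, sum_src_eq_Pprod x hxeig hxsum L,
      inv_mul_cancel₀ (ne_of_gt (Pprod_pos hρ2 L))]
  have h2 : ∀ i ∈ s, (∑ η : FinPath k N A L,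
      if IsSubPath (C i).2 η then (Pprod ρ L)⁻¹ * x η.src else 0)
      = (Pprod ρ (C i).1)⁻¹ * x (C i).2.src := by
    intro i his
    have hlen : (C i).1 ≤ L := by rw [hLdef]; exact Finset.le_sup (f := fun i => (C i).1) his
    have hkey := sum_subpath_src x hxeig (C i).2 L hlen
    have hsplit : Pprod ρ L
        = Pprod ρ (C i).1 * ∏ j ∈ Finset.Ico (C i).1 L, ρ ((j : ℕ) : Fin k) :=
      (Finset.prod_range_mul_prod_Ico _ hlen).symm
    have hIpos : (0 : ℝ) < ∏ j ∈ Finset.Ico (C i).1 L, ρ ((j : ℕ) : Fin k) :=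
      Finset.prod_pos fun j _ => lt_of_lt_of_le two_pos (hρ2 _)
    calc (∑ η : FinPath k N A L,
        if IsSubPath (C i).2 η then (Pprod ρ L)⁻¹ * x η.src else 0)
        = (Pprod ρ L)⁻¹ * ∑ η : FinPath k N A L,
            (if IsSubPath (C i).2 η then x η.src else 0) := by
          rw [Finset.mul_sum]
          apply Finset.sum_congr rfl
          intro η _
          by_cases hss : IsSubPath (C i).2 η <;> simp [hss]
      _ = (Pprod ρ L)⁻¹ * ((∏ j ∈ Finset.Ico (C i).1 L, ρ ((j : ℕ) : Fin k))
            * x (C i).2.src) := by rw [hkey]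
      _ = (Pprod ρ (C i).1)⁻¹ * x (C i).2.src := by
          rw [hsplit, mul_inv, mul_assoc, ← mul_assoc
            (∏ j ∈ Finset.Ico (C i).1 L, ρ ((j : ℕ) : Fin k))⁻¹,
            inv_mul_cancel₀ (ne_of_gt hIpos), one_mul]
  have h3 : ∀ η : FinPath k N A L, (Pprod ρ L)⁻¹ * x η.src
      ≤ ∑ i ∈ s, (if IsSubPath (C i).2 η then (Pprod ρ L)⁻¹ * x η.src else 0) := by
    intro η
    have hmono := Finset.single_le_sum
      (f := fun i => if IsSubPath (C i).2 η then (Pprod ρ L)⁻¹ * x η.src else 0)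
      (fun i _ => by
        beta_reduce
        by_cases hss : IsSubPath (C i).2 η
        · rw [if_pos hss]
          exact mul_nonneg (hnneg L) (le_of_lt (hxpos _))
        · rw [if_neg hss])
      (hpick η)
    have hmono' : (if IsSubPath (C (pick η)).2 η then (Pprod ρ L)⁻¹ * x η.src else 0)
        ≤ ∑ i ∈ s, (if IsSubPath (C i).2 η then (Pprod ρ L)⁻¹ * x η.src else 0) := hmono
    rwa [if_pos (hsubp η)] at hmono'

  calc (1 : ℝ) = ∑ η : FinPath k N A L, (Pprod ρ L)⁻¹ * x η.src := h1
    _ ≤ ∑ η : FinPath k N A L, ∑ i ∈ s,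
          (if IsSubPath (C i).2 η then (Pprod ρ L)⁻¹ * x η.src else 0) :=
        Finset.sum_le_sum (fun η _ => h3 η)
    _ = ∑ i ∈ s, ∑ η : FinPath k N A L,
          (if IsSubPath (C i).2 η then (Pprod ρ L)⁻¹ * x η.src else 0) :=
        Finset.sum_comm
    _ = ∑ i ∈ s, (Pprod ρ (C i).1)⁻¹ * x (C i).2.src := Finset.sum_congr rfl h2

lemma tsum_mass_ge_one (x : Fin N → ℝ)
    (hxeig : ∀ i, ((A i).map (Nat.cast : ℕ → ℝ)).mulVec x = ρ i • x)
    (hxsum : ∑ v, x v = 1) (hxpos : ∀ v, 0 < x v) (hρ2 : ∀ i, 2 ≤ ρ i)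
    (hrow : ∀ (i : Fin k) (a : Fin N), 2 ≤ ∑ b, A i a b)
    (C : ℕ → FB k N A)
    (hcov : ∀ z : PathSpace k N A, ∃ i, z ∈ Cyl (C i).2) :
    (1 : ℝ≥0∞) ≤ ∑' i, ENNReal.ofReal ((Pprod ρ (C i).1)⁻¹ * x (C i).2.src) := by
  obtain ⟨s, hs⟩ := cyl_cover_finite C hcov
  have h1 := finite_cover_mass x hxeig hxsum hxpos hρ2 hrow C s hs
  calc (1 : ℝ≥0∞) = ENNReal.ofReal 1 := by simp
    _ ≤ ENNReal.ofReal (∑ i ∈ s, (Pprod ρ (C i).1)⁻¹ * x (C i).2.src) :=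
        ENNReal.ofReal_le_ofReal h1
    _ = ∑ i ∈ s, ENNReal.ofReal ((Pprod ρ (C i).1)⁻¹ * x (C i).2.src) :=
        ENNReal.ofReal_sum_of_nonneg (fun i _ =>
          mul_nonneg (le_of_lt (inv_pos.mpr (Pprod_pos hρ2 _))) (le_of_lt (hxpos _)))
    _ ≤ ∑' i, ENNReal.ofReal ((Pprod ρ (C i).1)⁻¹ * x (C i).2.src) :=
        ENNReal.sum_le_tsum s

end Cover


section Metric

variable (x : Fin N → ℝ)

lemma rpow_neg_anti {u v c : ℝ} (hu : 1 ≤ u) (huv : u ≤ v) (hc : 0 ≤ c) :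
    v ^ (-c) ≤ u ^ (-c) := by
  have hu0 : (0:ℝ) < u := lt_of_lt_of_le one_pos hu
  have hv0 : (0:ℝ) < v := lt_of_lt_of_le hu0 huv
  rw [Real.rpow_neg (le_of_lt hu0), Real.rpow_neg (le_of_lt hv0)]
  exact inv_anti₀ (Real.rpow_pos_of_pos hu0 c)
    (Real.rpow_le_rpow (le_of_lt hu0) huv hc)

lemma ne_set_nonempty {a b : PathSpace k N A} (hab : a ≠ b) :
    {n | a.1 n ≠ b.1 n}.Nonempty := by
  by_contra h
  rw [Set.not_nonempty_iff_eq_empty] at h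
  apply hab
  apply Subtype.ext
  funext n
  by_contra hne
  rw [Set.eq_empty_iff_forall_notMem] at h
  exact h n hne

lemma le_firstDiff {a b : PathSpace k N A} {n : ℕ}
    (h : ∀ i, i < n → a.1 i = b.1 i) (hab : a ≠ b) : n ≤ firstDiff a b := by
  by_contra hlt
  push_neg at hlt
  exact (Nat.sInf_mem (ne_set_nonempty hab)) (h _ hlt)

lemma eq_of_lt_firstDiff {a b : PathSpace k N A} {i : ℕ} (hi : i < firstDiff a b) :
    a.1 i = b.1 i := by
  by_contra hne
  exact absurd (Nat.sInf_le hne) (not_le.mpr hi)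

variable {δ : ℝ}

lemma distW_le_cyl (hρ2 : ∀ i, 2 ≤ ρ i) (hx1 : ∀ v, x v ≤ 1) (hδ0 : 0 < δ)
    {n : ℕ} (η : FinPath k N A n) {a b : PathSpace k N A}
    (ha : a ∈ Cyl η) (hb : b ∈ Cyl η) :
    distW (wt δ ρ x) a b ≤ Pprod ρ n ^ (-(1/δ)) := by
  have hPn : (0:ℝ) < Pprod ρ n := Pprod_pos hρ2 n
  rw [distW]
  by_cases hab : a = b
  · rw [if_pos hab]
    exact Real.rpow_nonneg (le_of_lt hPn) _
  · rw [if_neg hab, if_pos (by rw [ha.1, hb.1])]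
    rw [wt_eq]
    have hnd : n ≤ firstDiff a b := by
      apply le_firstDiff _ hab
      intro i hi
      rw [ha.2 ⟨i, hi⟩, hb.2 ⟨i, hi⟩]
    calc Pprod ρ (firstDiff a b) ^ (-(1/δ)) * x (prefixPath a (firstDiff a b)).src
        ≤ Pprod ρ (firstDiff a b) ^ (-(1/δ)) * 1 := mul_le_mul_of_nonneg_left (hx1 _)
            (Real.rpow_nonneg (le_of_lt (Pprod_pos hρ2 _)) _)
      _ = Pprod ρ (firstDiff a b) ^ (-(1/δ)) := mul_one _
      _ ≤ Pprod ρ n ^ (-(1/δ)) := rpow_neg_anti (Pprod_one_le hρ2 n)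
          (Pprod_mono hρ2 hnd) (le_of_lt (one_div_pos.mpr hδ0))

lemma diamW_cyl_le (hρ2 : ∀ i, 2 ≤ ρ i) (hx1 : ∀ v, x v ≤ 1) (hδ0 : 0 < δ)
    {n : ℕ} (η : FinPath k N A n) :
    diamW (wt δ ρ x) (Cyl η) ≤ ENNReal.ofReal (Pprod ρ n ^ (-(1/δ))) := by
  rw [diamW]
  refine iSup_le fun a => iSup_le fun ha => iSup_le fun b => iSup_le fun hb => ?_
  exact ENNReal.ofReal_le_ofReal (distW_le_cyl x hρ2 hx1 hδ0 η ha hb)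

lemma diamW_empty (w : FB k N A → ℝ) : diamW w (∅ : Set (PathSpace k N A)) = 0 := by
  simp [diamW]

lemma le_diamW (w : FB k N A → ℝ) {U : Set (PathSpace k N A)} {a b : PathSpace k N A}
    (ha : a ∈ U) (hb : b ∈ U) :
    ENNReal.ofReal (distW w a b) ≤ diamW w U :=
  le_iSup_of_le a (le_iSup_of_le ha (le_iSup_of_le b (le_iSup_of_le hb le_rfl)))

lemma wt_pos (hρ2 : ∀ i, 2 ≤ ρ i) (hxpos : ∀ v, 0 < x v) {n : ℕ}
    (lam : FinPath k N A n) : 0 < wt δ ρ x ⟨n, lam⟩ := by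
  rw [wt_eq]
  exact mul_pos (Real.rpow_pos_of_pos (Pprod_pos hρ2 n) _) (hxpos _)

lemma mval_le_wt_rpow (hδ0 : 0 < δ) (hδ1 : δ < 1) (hρ2 : ∀ i, 2 ≤ ρ i)
    (hxpos : ∀ v, 0 < x v) (hx1 : ∀ v, x v ≤ 1) {n : ℕ} (lam : FinPath k N A n) :
    (Pprod ρ n)⁻¹ * x lam.src ≤ (wt δ ρ x ⟨n, lam⟩) ^ δ := by
  rw [wt_eq]
  have hP : (0:ℝ) < Pprod ρ n := Pprod_pos hρ2 n
  have hxs : 0 < x lam.src := hxpos _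
  rw [Real.mul_rpow (Real.rpow_nonneg (le_of_lt hP) _) (le_of_lt hxs)]
  rw [← Real.rpow_mul (le_of_lt hP)]
  have he : (-(1/δ)) * δ = -1 := by field_simp
  rw [he, Real.rpow_neg_one]
  apply mul_le_mul_of_nonneg_left _ (inv_nonneg.mpr (le_of_lt hP))
  calc x lam.src = x lam.src ^ (1:ℝ) := (Real.rpow_one _).symm
    _ ≤ x lam.src ^ δ := Real.rpow_le_rpow_of_exponent_ge hxs (hx1 _) (le_of_lt hδ1)

lemma rho_ge_two [NeZero N] (hxpos : ∀ v, 0 < x v)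
    (hrow : ∀ (i : Fin k) (a : Fin N), 2 ≤ ∑ b, A i a b)
    (hxeig : ∀ i, ((A i).map (Nat.cast : ℕ → ℝ)).mulVec x = ρ i • x) :
    ∀ i, 2 ≤ ρ i := by
  intro i
  obtain ⟨v, -, hv⟩ := Finset.exists_min_image Finset.univ x ⟨0, Finset.mem_univ 0⟩
  have h := congrFun (hxeig i) v
  simp only [Matrix.mulVec, dotProduct, Matrix.map_apply, Pi.smul_apply,
    smul_eq_mul] at h
  have h2 : (2:ℝ) * x v ≤ ∑ q, (A i v q : ℝ) * x q := by
    calc (2:ℝ) * x v ≤ (∑ q, (A i v q : ℝ)) * x v := by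
          apply mul_le_mul_of_nonneg_right _ (le_of_lt (hxpos v))
          exact_mod_cast hrow i v
      _ = ∑ q, (A i v q : ℝ) * x v := Finset.sum_mul _ _ _
      _ ≤ ∑ q, (A i v q : ℝ) * x q := Finset.sum_le_sum fun q _ =>
          mul_le_mul_of_nonneg_left (hv q (Finset.mem_univ q)) (Nat.cast_nonneg _)
  rw [h] at h2
  exact le_of_mul_le_mul_right h2 (hxpos v)

lemma x_le_one [NeZero N] (hxpos : ∀ v, 0 < x v) (hxsum : ∑ v, x v = 1) :
    ∀ v, x v ≤ 1 := fun v =>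
  hxsum ▸ Finset.single_le_sum (fun w _ => le_of_lt (hxpos w)) (Finset.mem_univ v)

end Metric


section MainBounds

variable (x : Fin N → ℝ) {δ t : ℝ}

lemma hausW_eq_zero [NeZero N] (hρ2 : ∀ i, 2 ≤ ρ i)
    (hxeig : ∀ i, ((A i).map (Nat.cast : ℕ → ℝ)).mulVec x = ρ i • x)
    (hxsum : ∑ v, x v = 1) (hxpos : ∀ v, 0 < x v) (hx1 : ∀ v, x v ≤ 1)
    (hδ0 : 0 < δ) (hδt : δ < t) :
    hausW (wt δ ρ x) t (Set.univ : Set (PathSpace k N A)) = 0 := by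
  classical
  set w := wt δ ρ x with hw
  have ht0 : (0:ℝ) < t := lt_trans hδ0 hδt
  obtain ⟨v0, -, hv0⟩ := Finset.exists_min_image Finset.univ x ⟨0, Finset.mem_univ 0⟩
  have hxm0 : (0:ℝ) < x v0 := hxpos v0
  have card_le : ∀ n : ℕ, (Fintype.card (FinPath k N A n) : ℝ) * x v0 ≤ Pprod ρ n := by
    intro n
    rw [← sum_src_eq_Pprod x hxeig hxsum n]
    calc (Fintype.card (FinPath k N A n) : ℝ) * x v0
        = ∑ _η : FinPath k N A n, x v0 := by
          rw [Finset.sum_const, Finset.card_univ, nsmul_eq_mul]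
      _ ≤ ∑ η : FinPath k N A n, x η.src :=
          Finset.sum_le_sum fun η _ => hv0 _ (Finset.mem_univ _)
  -- the tsum of the level-n cylinder cover
  have key : ∀ n : ℕ, ∃ U : ℕ → Set (PathSpace k N A),
      (Set.univ ⊆ ⋃ j, U j) ∧
      (∀ j, diamW w (U j) ≤ ENNReal.ofReal (Pprod ρ n ^ (-(1/δ)))) ∧
      ((∑' j, diamW w (U j) ^ t)
        ≤ ENNReal.ofReal ((x v0)⁻¹ * ((2:ℝ) ^ n) ^ ((1:ℝ) - t/δ))) := by
    intro n
    set m := Fintype.card (FinPath k N A n) with hm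
    set e := Fintype.equivFin (FinPath k N A n) with he
    set U : ℕ → Set (PathSpace k N A) := fun j =>
      if h : j < m then Cyl (e.symm ⟨j, h⟩) else ∅ with hU
    have hcov : Set.univ ⊆ ⋃ j, U j := by
      intro z _
      apply Set.mem_iUnion.mpr
      refine ⟨(e (prefixPath z n) : ℕ), ?_⟩
      have hj : ((e (prefixPath z n) : ℕ)) < m := (e (prefixPath z n)).2
      have : U ((e (prefixPath z n) : ℕ)) = Cyl (prefixPath z n) := by
        rw [hU]
        simp only [dif_pos hj]
        congr 1
        rw [show (⟨(e (prefixPath z n) : ℕ), hj⟩ : Fin m) = e (prefixPath z n) from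
          Fin.ext rfl, Equiv.symm_apply_apply]
      rw [this]
      exact mem_cyl_prefixPath z n
    have hdiam : ∀ j, diamW w (U j) ≤ ENNReal.ofReal (Pprod ρ n ^ (-(1/δ))) := by
      intro j
      rw [hU]
      beta_reduce
      by_cases h : j < m
      · rw [dif_pos h]
        exact diamW_cyl_le x hρ2 hx1 hδ0 _
      · rw [dif_neg h, diamW_empty]
        exact zero_le
    refine ⟨U, hcov, hdiam, ?_⟩
    have hzero : ∀ j ∉ Finset.range m, diamW w (U j) ^ t = 0 := by
      intro j hj
      rw [hU]
      beta_reduce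
      rw [dif_neg (by simpa using hj : ¬ j < m), diamW_empty]
      exact ENNReal.zero_rpow_of_pos ht0
    rw [tsum_eq_sum hzero]
    have hstep : ∑ j ∈ Finset.range m, diamW w (U j) ^ t
        ≤ (m : ℝ≥0∞) * ENNReal.ofReal (Pprod ρ n ^ (-(1/δ))) ^ t := by
      calc ∑ j ∈ Finset.range m, diamW w (U j) ^ t
          ≤ ∑ _j ∈ Finset.range m, ENNReal.ofReal (Pprod ρ n ^ (-(1/δ))) ^ t :=
            Finset.sum_le_sum fun j _ =>
              ENNReal.rpow_le_rpow (hdiam j) (le_of_lt ht0)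
        _ = (m : ℝ≥0∞) * ENNReal.ofReal (Pprod ρ n ^ (-(1/δ))) ^ t := by
            rw [Finset.sum_const, Finset.card_range, nsmul_eq_mul]
    refine le_trans hstep ?_
    have hP : (0:ℝ) < Pprod ρ n := Pprod_pos hρ2 n
    have hWnn : (0:ℝ) ≤ Pprod ρ n ^ (-(1/δ)) := Real.rpow_nonneg (le_of_lt hP) _
    rw [ENNReal.ofReal_rpow_of_nonneg hWnn (le_of_lt ht0)]
    rw [show ((m : ℝ≥0∞)) = ENNReal.ofReal (m : ℝ) from (ENNReal.ofReal_natCast m).symm]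
    rw [← ENNReal.ofReal_mul (Nat.cast_nonneg m)]
    apply ENNReal.ofReal_le_ofReal
    -- real computation
    have h1 : (Pprod ρ n ^ (-(1/δ))) ^ t = Pprod ρ n ^ (-(t/δ)) := by
      rw [← Real.rpow_mul (le_of_lt hP)]
      congr 1
      field_simp
    rw [h1]
    have h2 : (m : ℝ) ≤ (x v0)⁻¹ * Pprod ρ n := by
      rw [inv_mul_eq_div, le_div_iff₀ hxm0]
      exact card_le n
    have h3 : (0:ℝ) ≤ Pprod ρ n ^ (-(t/δ)) := Real.rpow_nonneg (le_of_lt hP) _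
    calc (m : ℝ) * Pprod ρ n ^ (-(t/δ))
        ≤ ((x v0)⁻¹ * Pprod ρ n) * Pprod ρ n ^ (-(t/δ)) :=
          mul_le_mul_of_nonneg_right h2 h3
      _ = (x v0)⁻¹ * (Pprod ρ n ^ ((1:ℝ) - t/δ)) := by
          rw [mul_assoc]
          congr 1
          rw [show (1:ℝ) - t/δ = 1 + (-(t/δ)) from by ring, Real.rpow_add hP,
            Real.rpow_one]
      _ ≤ (x v0)⁻¹ * ((2:ℝ) ^ n) ^ ((1:ℝ) - t/δ) := by
          apply mul_le_mul_of_nonneg_left _ (inv_nonneg.mpr (le_of_lt hxm0))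
          rw [show (1:ℝ) - t/δ = -(t/δ - 1) from by ring]
          exact rpow_neg_anti (one_le_pow₀ one_le_two) (Pprod_ge hρ2 n)
            (by
              have : (1:ℝ) < t/δ := (one_lt_div hδ0).mpr hδt
              linarith)
  -- limits
  have hr1 : (0:ℝ) < (2:ℝ) ^ (-(1/δ)) := Real.rpow_pos_of_pos two_pos _
  have hr1lt : (2:ℝ) ^ (-(1/δ)) < 1 :=
    Real.rpow_lt_one_of_one_lt_of_neg one_lt_two (by
      have := one_div_pos.mpr hδ0; linarith)
  have hr2 : (0:ℝ) < (2:ℝ) ^ ((1:ℝ) - t/δ) := Real.rpow_pos_of_pos two_pos _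
  have hr2lt : (2:ℝ) ^ ((1:ℝ) - t/δ) < 1 :=
    Real.rpow_lt_one_of_one_lt_of_neg one_lt_two (by
      have : (1:ℝ) < t/δ := (one_lt_div hδ0).mpr hδt
      linarith)
  have hpow : ∀ (r : ℝ) (n : ℕ), ((2:ℝ) ^ n) ^ r = ((2:ℝ) ^ r) ^ n := by
    intro r n
    rw [← Real.rpow_natCast 2 n, ← Real.rpow_mul (by norm_num), mul_comm,
      Real.rpow_mul (by norm_num), Real.rpow_natCast]
  -- bound 1 : level-n weight bound tends to 0
  have htend1 : Filter.Tendsto (fun n : ℕ => ENNReal.ofReal (Pprod ρ n ^ (-(1/δ))))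
      Filter.atTop (nhds 0) := by
    rw [show (0:ℝ≥0∞) = ENNReal.ofReal 0 from by simp]
    apply ENNReal.tendsto_ofReal
    apply squeeze_zero (g := fun n : ℕ => ((2:ℝ) ^ (-(1/δ))) ^ n)
      (fun n => Real.rpow_nonneg (le_of_lt (Pprod_pos hρ2 n)) _)
      (fun n => by
        calc Pprod ρ n ^ (-(1/δ)) ≤ ((2:ℝ)^n) ^ (-(1/δ)) :=
              rpow_neg_anti (one_le_pow₀ one_le_two) (Pprod_ge hρ2 n)
                (le_of_lt (one_div_pos.mpr hδ0))
          _ = ((2:ℝ) ^ (-(1/δ))) ^ n := hpow _ n)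
      (tendsto_pow_atTop_nhds_zero_of_lt_one (le_of_lt hr1) hr1lt)
  have htend2 : Filter.Tendsto
      (fun n : ℕ => ENNReal.ofReal ((x v0)⁻¹ * ((2:ℝ) ^ n) ^ ((1:ℝ) - t/δ)))
      Filter.atTop (nhds 0) := by
    rw [show (0:ℝ≥0∞) = ENNReal.ofReal 0 from by simp]
    apply ENNReal.tendsto_ofReal
    have : Filter.Tendsto (fun n : ℕ => (x v0)⁻¹ * ((2:ℝ) ^ ((1:ℝ) - t/δ)) ^ n)
        Filter.atTop (nhds ((x v0)⁻¹ * 0)) :=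
      (tendsto_pow_atTop_nhds_zero_of_lt_one (le_of_lt hr2) hr2lt).const_mul _
    rw [mul_zero] at this
    convert this using 2 with n
    rw [hpow]
  -- conclude
  apply le_antisymm _ zero_le
  rw [hausW]
  apply iSup_le; intro ε; apply iSup_le; intro hε
  apply ENNReal.le_of_forall_pos_le_add
  intro c hc _
  rw [zero_add]
  have hev1 := htend1.eventually_lt_const hε
  have hev2 : ∀ᶠ n in Filter.atTop,
      ENNReal.ofReal ((x v0)⁻¹ * ((2:ℝ) ^ n) ^ ((1:ℝ) - t/δ)) < (c : ℝ≥0∞) := by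
    apply htend2.eventually_lt_const
    exact_mod_cast hc
  obtain ⟨n, h1, h2⟩ := (hev1.and hev2).exists
  obtain ⟨U, hcov, hdiam, hsum⟩ := key n
  have hdiamlt : ∀ j, diamW w (U j) < ε := fun j => lt_of_le_of_lt (hdiam j) h1
  refine le_trans (iInf_le_of_le U (iInf_le_of_le hcov (iInf_le_of_le hdiamlt le_rfl))) ?_
  exact le_trans hsum (le_of_lt h2)


lemma mval_small (hρ2 : ∀ i, 2 ≤ ρ i) (hxpos : ∀ v, 0 < x v) (hx1 : ∀ v, x v ≤ 1)
    {m : ℕ} (lam : FinPath k N A m) :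
    ENNReal.ofReal ((Pprod ρ m)⁻¹ * x lam.src) ≤ (2⁻¹ : ℝ≥0∞) ^ m := by
  have hP : (0:ℝ) < Pprod ρ m := Pprod_pos hρ2 m
  have h1 : (Pprod ρ m)⁻¹ * x lam.src ≤ ((2:ℝ)⁻¹) ^ m := by
    calc (Pprod ρ m)⁻¹ * x lam.src ≤ (Pprod ρ m)⁻¹ * 1 :=
          mul_le_mul_of_nonneg_left (hx1 _) (inv_nonneg.mpr (le_of_lt hP))
      _ = (Pprod ρ m)⁻¹ := mul_one _
      _ ≤ ((2:ℝ) ^ m)⁻¹ := inv_anti₀ (pow_pos two_pos m) (Pprod_ge hρ2 m)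
      _ = ((2:ℝ)⁻¹) ^ m := (inv_pow 2 m).symm
  calc ENNReal.ofReal ((Pprod ρ m)⁻¹ * x lam.src)
      ≤ ENNReal.ofReal (((2:ℝ)⁻¹) ^ m) := ENNReal.ofReal_le_ofReal h1
    _ = (2⁻¹ : ℝ≥0∞) ^ m := by
        rw [ENNReal.ofReal_pow (by norm_num)]
        congr 1
        rw [ENNReal.ofReal_inv_of_pos two_pos]
        norm_num

lemma hausW_eq_top [NeZero N] (hρ2 : ∀ i, 2 ≤ ρ i)
    (hxeig : ∀ i, ((A i).map (Nat.cast : ℕ → ℝ)).mulVec x = ρ i • x)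
    (hxsum : ∑ v, x v = 1) (hxpos : ∀ v, 0 < x v) (hx1 : ∀ v, x v ≤ 1)
    (hrow : ∀ (i : Fin k) (a : Fin N), 2 ≤ ∑ b, A i a b)
    (hδ0 : 0 < δ) (hδ1 : δ < 1) (ht0 : 0 ≤ t) (htδ : t < δ) :
    hausW (wt δ ρ x) t (Set.univ : Set (PathSpace k N A)) = ⊤ := by
  classical
  set w := wt δ ρ x with hw
  have key : ∀ ε' : ℝ, 0 < ε' → ε' ≤ 1 →
      ∀ (U : ℕ → Set (PathSpace k N A)), (Set.univ ⊆ ⋃ n, U n) →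
      (∀ n, diamW w (U n) < ENNReal.ofReal ε') →
      (2⁻¹ : ℝ≥0∞) / ENNReal.ofReal (ε' ^ (δ - t)) ≤ ∑' n, diamW w (U n) ^ t := by
    intro ε' hε'0 hε'1 U hcov hdiam
    set ε : ℝ≥0∞ := ENNReal.ofReal ε' with hε
    have hεle1 : ε ≤ 1 := by
      rw [hε, show (1:ℝ≥0∞) = ENNReal.ofReal 1 from by simp]
      exact ENNReal.ofReal_le_ofReal hε'1
    have hC : ∀ n : ℕ, ∃ lam : FB k N A, (U n ⊆ Cyl lam.2) ∧
        (ENNReal.ofReal ((Pprod ρ lam.1)⁻¹ * x lam.2.src)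
          ≤ diamW w (U n) ^ t * ε ^ (δ - t) + (2⁻¹ : ℝ≥0∞) ^ (n + 2)) := by
      intro n
      by_cases hU2 : ∃ a ∈ U n, ∃ b ∈ U n, b ≠ a
      · obtain ⟨a, ha, b0, hb0, hba⟩ := hU2
        have hroots : ∀ z, z ∈ U n → z ≠ a → (z.1 0).rg = (a.1 0).rg := by
          intro z hz hza
          by_contra hne
          have hd : distW w a z = 1 := by
            rw [distW, if_neg (fun h => hza h.symm), if_neg (fun h => hne h.symm)]
          have hlt := lt_of_le_of_lt (le_diamW w ha hz) (hdiam n)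
          rw [hd] at hlt
          have h1lt : (1:ℝ≥0∞) < ε := by simpa using hlt
          exact absurd (lt_of_lt_of_le h1lt hεle1) (lt_irrefl 1)
        set D := {d : ℕ | ∃ z, z ∈ U n ∧ z ≠ a ∧ firstDiff a z = d} with hD
        have hDne : D.Nonempty := ⟨firstDiff a b0, b0, hb0, hba, rfl⟩
        obtain ⟨y, hyU, hya, hyd⟩ := Nat.sInf_mem hDne
        have hsub : U n ⊆ Cyl (prefixPath a (sInf D)) := by
          intro z hz
          by_cases hza : z = a
          · rw [hza]; exact mem_cyl_prefixPath a (sInf D)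
          · have hmem : firstDiff a z ∈ D := ⟨z, hz, hza, rfl⟩
            have hle : sInf D ≤ firstDiff a z := Nat.sInf_le hmem
            refine ⟨hroots z hz hza, fun i => ?_⟩
            exact (eq_of_lt_firstDiff (lt_of_lt_of_le i.2 hle)).symm
        have hdist : distW w a y = wt δ ρ x ⟨sInf D, prefixPath a (sInf D)⟩ := by
          rw [distW, if_neg (fun h => hya h.symm),
            if_pos (hroots y hyU hya).symm, hyd]
        have hwtle : ENNReal.ofReal (wt δ ρ x ⟨sInf D, prefixPath a (sInf D)⟩)
            ≤ diamW w (U n) := by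
          rw [← hdist]
          exact le_diamW w ha hyU
        have hwtpos : 0 < wt δ ρ x ⟨sInf D, prefixPath a (sInf D)⟩ :=
          wt_pos x hρ2 hxpos _
        have hdne0 : diamW w (U n) ≠ 0 := by
          intro h0
          rw [h0, le_zero_iff, ENNReal.ofReal_eq_zero] at hwtle
          linarith
        have hdnetop : diamW w (U n) ≠ ⊤ :=
          ne_top_of_lt (lt_of_lt_of_le (lt_of_lt_of_le (hdiam n) hεle1) le_top)
        refine ⟨⟨sInf D, prefixPath a (sInf D)⟩, hsub, ?_⟩
        calc ENNReal.ofReal ((Pprod ρ (sInf D))⁻¹ * x (prefixPath a (sInf D)).src)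
            ≤ ENNReal.ofReal ((wt δ ρ x ⟨sInf D, prefixPath a (sInf D)⟩) ^ δ) :=
              ENNReal.ofReal_le_ofReal (mval_le_wt_rpow x hδ0 hδ1 hρ2 hxpos hx1 _)
          _ = (ENNReal.ofReal (wt δ ρ x ⟨sInf D, prefixPath a (sInf D)⟩)) ^ δ :=
              (ENNReal.ofReal_rpow_of_nonneg (le_of_lt hwtpos) (le_of_lt hδ0)).symm
          _ ≤ diamW w (U n) ^ δ := ENNReal.rpow_le_rpow hwtle (le_of_lt hδ0)
          _ = diamW w (U n) ^ t * diamW w (U n) ^ (δ - t) := by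
              rw [← ENNReal.rpow_add t (δ - t) hdne0 hdnetop]
              congr 1
              ring
          _ ≤ diamW w (U n) ^ t * ε ^ (δ - t) :=
              mul_le_mul' le_rfl (ENNReal.rpow_le_rpow (le_of_lt (hdiam n))
                (le_of_lt (sub_pos.mpr htδ)))
          _ ≤ diamW w (U n) ^ t * ε ^ (δ - t) + (2⁻¹ : ℝ≥0∞) ^ (n + 2) := le_self_add
      · by_cases hne : ∃ a, a ∈ U n
        · obtain ⟨a, ha⟩ := hne
          refine ⟨⟨n+2, prefixPath a (n+2)⟩, ?_, ?_⟩
          · intro z hz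
            have hz' : z = a := by
              by_contra hzz
              exact hU2 ⟨a, ha, z, hz, hzz⟩
            rw [hz']
            exact mem_cyl_prefixPath a (n+2)
          · exact le_trans (mval_small x hρ2 hxpos hx1 _) le_add_self
        · have hX : (Cyl (vertexPath (0 : Fin N) : FinPath k N A 0)).Nonempty :=
            cyl_nonempty hrow _
          obtain ⟨a0, -⟩ := hX
          refine ⟨⟨n+2, prefixPath a0 (n+2)⟩, ?_, ?_⟩
          · intro z hz
            exact absurd ⟨z, hz⟩ hne
          · exact le_trans (mval_small x hρ2 hxpos hx1 _) le_add_self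
    choose C hC1 hC2 using hC
    have hcov' : ∀ z : PathSpace k N A, ∃ i, z ∈ Cyl (C i).2 := by
      intro z
      obtain ⟨i, hi⟩ := Set.mem_iUnion.mp (hcov (Set.mem_univ z))
      exact ⟨i, hC1 i hi⟩
    have hmass := tsum_mass_ge_one x hxeig hxsum hxpos hρ2 hrow C hcov'
    have hgeom : ∑' n : ℕ, (2⁻¹ : ℝ≥0∞) ^ (n + 2) = 2⁻¹ := by
      calc ∑' n : ℕ, (2⁻¹ : ℝ≥0∞) ^ (n + 2)
          = ∑' n : ℕ, (2⁻¹ : ℝ≥0∞) ^ n * (2⁻¹) ^ 2 :=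
            tsum_congr fun n => pow_add _ n 2
        _ = (∑' n : ℕ, (2⁻¹ : ℝ≥0∞) ^ n) * (2⁻¹) ^ 2 := ENNReal.tsum_mul_right
        _ = (1 - 2⁻¹)⁻¹ * (2⁻¹) ^ 2 := by rw [ENNReal.tsum_geometric]
        _ = 2⁻¹ := by
            rw [ENNReal.one_sub_inv_two, inv_inv, pow_two, ← mul_assoc,
              ENNReal.mul_inv_cancel two_ne_zero ENNReal.ofNat_ne_top, one_mul]
    have hXc : (1:ℝ≥0∞) ≤ (∑' n, diamW w (U n) ^ t) * ε ^ (δ - t) + 2⁻¹ := by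
      calc (1:ℝ≥0∞) ≤ ∑' i, ENNReal.ofReal ((Pprod ρ (C i).1)⁻¹ * x (C i).2.src) := hmass
        _ ≤ ∑' i, (diamW w (U i) ^ t * ε ^ (δ - t) + (2⁻¹ : ℝ≥0∞) ^ (i + 2)) :=
            ENNReal.tsum_le_tsum hC2
        _ = (∑' i, diamW w (U i) ^ t * ε ^ (δ - t)) + ∑' i, (2⁻¹ : ℝ≥0∞) ^ (i + 2) :=
            ENNReal.tsum_add
        _ = (∑' i, diamW w (U i) ^ t) * ε ^ (δ - t) + 2⁻¹ := by
            rw [ENNReal.tsum_mul_right, hgeom]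
    have hmain : (2⁻¹ : ℝ≥0∞) ≤ (∑' n, diamW w (U n) ^ t) * ε ^ (δ - t) := by
      rw [show (1:ℝ≥0∞) = 2⁻¹ + 2⁻¹ from ENNReal.inv_two_add_inv_two.symm] at hXc
      exact (ENNReal.add_le_add_iff_right (by simp)).mp hXc
    have hεrw : ε ^ (δ - t) = ENNReal.ofReal (ε' ^ (δ - t)) := by
      rw [hε, ENNReal.ofReal_rpow_of_nonneg (le_of_lt hε'0) (le_of_lt (sub_pos.mpr htδ))]
    rw [ENNReal.div_le_iff_le_mul
      (Or.inl (by rw [Ne, ENNReal.ofReal_eq_zero, not_le]; exact Real.rpow_pos_of_pos hε'0 _))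
      (Or.inl ENNReal.ofReal_ne_top)]
    rw [← hεrw]
    exact hmain
  -- conclude = ⊤
  suffices hsuff : ∀ b : ℝ≥0∞, b ≠ ⊤ → b ≤ hausW w t Set.univ by
    by_contra hne
    have h1 := hsuff (hausW w t Set.univ + 1)
      (ENNReal.add_ne_top.mpr ⟨hne, ENNReal.one_ne_top⟩)
    have h2 : hausW w t Set.univ < hausW w t Set.univ + 1 :=
      ENNReal.lt_add_right hne one_ne_zero
    exact absurd h1 (not_le.mpr h2)
  intro b hb
  set B := b.toReal with hB
  have hBnn : (0:ℝ) ≤ B := ENNReal.toReal_nonneg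
  set c := δ - t with hc
  have hc0 : (0:ℝ) < c := sub_pos.mpr htδ
  have hbase : (0:ℝ) < (2*(B+1))⁻¹ := by positivity
  set ε' := min 1 (((2*(B+1))⁻¹) ^ (1/c)) with hε'def
  have hε'0 : 0 < ε' := lt_min one_pos (Real.rpow_pos_of_pos hbase _)
  have hε'1 : ε' ≤ 1 := min_le_left _ _
  have hε'c : ε' ^ c ≤ (2*(B+1))⁻¹ := by
    calc ε' ^ c ≤ ((((2*(B+1))⁻¹) ^ (1/c))) ^ c :=
          Real.rpow_le_rpow (le_of_lt hε'0) (min_le_right _ _) (le_of_lt hc0)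
      _ = (2*(B+1))⁻¹ := by
          rw [← Real.rpow_mul (le_of_lt hbase), one_div,
            inv_mul_cancel₀ (ne_of_gt hc0), Real.rpow_one]
  have hble : b ≤ (2⁻¹ : ℝ≥0∞) / ENNReal.ofReal (ε' ^ c) := by
    have h2 : (2⁻¹:ℝ≥0∞) / ENNReal.ofReal ((2*(B+1))⁻¹)
        ≤ 2⁻¹ / ENNReal.ofReal (ε' ^ c) :=
      ENNReal.div_le_div_left (ENNReal.ofReal_le_ofReal hε'c) _
    refine le_trans ?_ h2
    rw [ENNReal.ofReal_inv_of_pos (by positivity), div_eq_mul_inv, inv_inv]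
    rw [show (2⁻¹:ℝ≥0∞) = ENNReal.ofReal (2⁻¹ : ℝ) from by
      rw [ENNReal.ofReal_inv_of_pos two_pos]; norm_num]
    rw [← ENNReal.ofReal_mul (by norm_num)]
    calc b = ENNReal.ofReal B := (ENNReal.ofReal_toReal hb).symm
      _ ≤ ENNReal.ofReal ((2:ℝ)⁻¹ * (2*(B+1))) := by
          apply ENNReal.ofReal_le_ofReal
          nlinarith
  have hIle : (2⁻¹ : ℝ≥0∞) / ENNReal.ofReal (ε' ^ c)
      ≤ ⨅ (U : ℕ → Set (PathSpace k N A)) (_ : Set.univ ⊆ ⋃ n, U n)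
          (_ : ∀ n, diamW w (U n) < ENNReal.ofReal ε'), ∑' n, diamW w (U n) ^ t :=
    le_iInf fun U => le_iInf fun hcov => le_iInf fun hdiam =>
      key ε' hε'0 hε'1 U hcov hdiam
  have hSup : (⨅ (U : ℕ → Set (PathSpace k N A)) (_ : Set.univ ⊆ ⋃ n, U n)
          (_ : ∀ n, diamW w (U n) < ENNReal.ofReal ε'), ∑' n, diamW w (U n) ^ t)
      ≤ hausW w t Set.univ := by
    rw [hausW]
    exact le_iSup_of_le (ENNReal.ofReal ε')
      (le_iSup_of_le (ENNReal.ofReal_pos.mpr hε'0) le_rfl)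
  exact le_trans hble (le_trans hIle hSup)

end MainBounds

end Aux

/-- The Hausdorff dimension of `(X_B, d_δ)` is `δ`: for every
`t ≥ 0`, the `t`-dimensional Hausdorff measure of `X_B` is `∞` when `t < δ` and
`0` when `t > δ`. -/
theorem statement11 (k N : ℕ) [NeZero k] [NeZero N]
    (A : Fin k → Matrix (Fin N) (Fin N) ℕ)
    (hcomm : ∀ i j, A i * A j = A j * A i)
    (hirr : IrreducibleFamily A)
    (hrow : ∀ (i : Fin k) (a : Fin N), 2 ≤ ∑ b, A i a b)
    (ρ : Fin k → ℝ) (hρ : ∀ i, ρ i = specRad (A i))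
    (x : Fin N → ℝ) (hxpos : ∀ v, 0 < x v) (hxsum : ∑ v, x v = 1)
    (hxeig : ∀ i, ((A i).map (Nat.cast : ℕ → ℝ)).mulVec x = ρ i • x)
    (δ : ℝ) (hδ : δ ∈ Set.Ioo (0 : ℝ) 1) :
    ∀ t : ℝ, 0 ≤ t →
      (t < δ → hausW (wt δ ρ x) t (Set.univ : Set (PathSpace k N A)) = ⊤) ∧
      (δ < t → hausW (wt δ ρ x) t (Set.univ : Set (PathSpace k N A)) = 0) := by
  obtain ⟨hδ0, hδ1⟩ := hδ
  have hρ2 : ∀ i, 2 ≤ ρ i := rho_ge_two x hxpos hrow hxeig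
  have hx1 : ∀ v, x v ≤ 1 := x_le_one x hxpos hxsum
  intro t ht
  exact ⟨fun htδ => hausW_eq_top x hρ2 hxeig hxsum hxpos hx1 hrow hδ0 hδ1 ht htδ,
    fun hδt => hausW_eq_zero x hρ2 hxeig hxsum hxpos hx1 hδ0 hδt⟩

end KBratteli
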